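/- For every integer n ≥ 3, there exists a universal cycle for the set of non-bijective words of length n over Fin n, i.e., words w : Fin n → Fin n such that w is not a bijection of Fin n. -/

import Mathlib

/- The finite set of words of length `k` over a finite alphabet `A`
satisfying a predicate `P`. -/
open Classical in
noncomputable def wordsOf {A : Type*} [Fintype A] {k : ℕ} (P : (Fin k → A) → Prop) :
    Finset (Fin k → A) :=
  Finset.univ.filter P

/-- A nonempty finite set `S` of words of length `k` over `A` admits a universal cycle:
a function `c : ZMod S.card → A` such that `i ↦ (fun j => c (i + j))` is a bijection
from `ZMod S.card` onto `S`. -/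
def HasUCycle {A : Type*} {k : ℕ} (S : Finset (Fin k → A)) : Prop :=
  ∃ c : ZMod S.card → A,
    Set.BijOn (fun i : ZMod S.card => fun j : Fin k => c (i + (j.val : ZMod S.card)))
      Set.univ ↑S

set_option linter.unusedSectionVars false
set_option linter.deprecated false
set_option maxHeartbeats 1000000

theorem List.getLast_eq_get {α : Type*} (l : List α) (h : l ≠ []) :
    l.getLast h = l.get ⟨l.length - 1, by have := List.length_pos_of_ne_nil h; omega⟩ := by
  rw [List.getLast_eq_getElem]
  rfl

section Euler
variable {E V : Type*} [DecidableEq E] [DecidableEq V] (src dst : E → V)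


lemma count_src_dst (v : V) : ∀ (L : List E), L.Chain' (fun a b => dst a = src b) →
    ∀ (hL : L ≠ []),
    L.countP (fun e => decide (dst e = v)) + (if src (L.head hL) = v then 1 else 0)
      = L.countP (fun e => decide (src e = v)) + (if dst (L.getLast hL) = v then 1 else 0)
  | [], _, hL => absurd rfl hL
  | [a], _, _ => by
      simp only [List.countP_singleton, List.head_cons, List.getLast_singleton,
        decide_eq_true_eq]
      split_ifs <;> simp_all
  | a :: b :: L, h, _ => by
      have hab : dst a = src b := (List.isChain_cons_cons.mp h).1
      have h' := count_src_dst v (b :: L) (List.isChain_cons_cons.mp h).2 (by simp)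
      simp only [List.countP_cons, List.head_cons, decide_eq_true_eq,
        List.getLast_cons (List.cons_ne_nil b L)] at *
      rw [hab] at *
      grind

lemma countP_eq_card_filter (l : List E) (hl : l.Nodup) (p : E → Prop) [DecidablePred p] :
    l.countP (fun e => decide (p e)) = (l.toFinset.filter p).card := by
  rw [List.countP_eq_length_filter, ← List.toFinset_card_of_nodup (hl.filter _),
    List.toFinset_filter]
  simp

/-- If a trail is not closed, it can be extended by a fresh edge. -/
lemma extend_of_not_closed (R : Finset E)
    (hbal : ∀ v, (R.filter (fun e => src e = v)).card = (R.filter (fun e => dst e = v)).card)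
    (a : E) (L : List E) (hnd : (a :: L).Nodup)
    (hch : (a :: L).Chain' (fun x y => dst x = src y))
    (hsub : ∀ e ∈ a :: L, e ∈ R)
    (hva : ¬ dst ((a :: L).getLast (List.cons_ne_nil a L)) = src a) :
    ∃ e ∈ R, e ∉ a :: L ∧ src e = dst ((a :: L).getLast (List.cons_ne_nil a L)) := by
  set v := dst ((a :: L).getLast (List.cons_ne_nil a L)) with hv
  by_contra hcon
  push_neg at hcon
  have hcount := count_src_dst src dst v (a :: L) hch (List.cons_ne_nil a L)
  rw [List.head_cons] at hcount
  rw [if_neg (show ¬ src a = v from fun h => hva h.symm), if_pos rfl] at hcount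
  -- all src-v edges of R lie in the trail
  have hS : R.filter (fun e => src e = v) ⊆ (a :: L).toFinset.filter (fun e => src e = v) := by
    intro e he
    rw [Finset.mem_filter] at he ⊢
    refine ⟨List.mem_toFinset.2 ?_, he.2⟩
    by_contra hne
    exact (hcon e he.1 hne) he.2
  have hD : (a :: L).toFinset.filter (fun e => dst e = v) ⊆ R.filter (fun e => dst e = v) := by
    intro e he
    rw [Finset.mem_filter] at he ⊢
    exact ⟨hsub e (List.mem_toFinset.1 he.1), he.2⟩
  have h1 := Finset.card_le_card hS
  have h2 := Finset.card_le_card hD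
  rw [← countP_eq_card_filter _ hnd] at h1 h2
  have := hbal v
  omega

lemma grow_aux (R : Finset E)
    (hbal : ∀ v, (R.filter (fun e => src e = v)).card = (R.filter (fun e => dst e = v)).card)
    (k : ℕ) :
    ∀ (a : E) (L : List E), (a :: L).Nodup → (a :: L).Chain' (fun x y => dst x = src y) →
    (∀ e ∈ a :: L, e ∈ R) → R.card - (a :: L).length ≤ k →
    ∃ C : List E, (a :: C).Nodup ∧ (a :: C).Chain' (fun x y => dst x = src y) ∧
      (∀ e ∈ a :: C, e ∈ R) ∧ dst ((a :: C).getLast (List.cons_ne_nil a C)) = src a := by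
  induction k with
  | zero =>
    intro a L hnd hch hsub hlen
    by_cases hva : dst ((a :: L).getLast (List.cons_ne_nil a L)) = src a
    · exact ⟨L, hnd, hch, hsub, hva⟩
    · exfalso
      obtain ⟨e, heR, heL, hesrc⟩ := extend_of_not_closed src dst R hbal a L hnd hch hsub hva
      have hsub' : insert e (a :: L).toFinset ⊆ R := by
        intro x hx
        rcases Finset.mem_insert.1 hx with rfl | hx
        · exact heR
        · exact hsub x (List.mem_toFinset.1 hx)
      have hcard := Finset.card_le_card hsub'
      rw [Finset.card_insert_of_notMem (fun h => heL (List.mem_toFinset.1 h)),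
        List.toFinset_card_of_nodup hnd] at hcard
      simp only [List.length_cons] at hlen hcard
      omega
  | succ k ih =>
    intro a L hnd hch hsub hlen
    by_cases hva : dst ((a :: L).getLast (List.cons_ne_nil a L)) = src a
    · exact ⟨L, hnd, hch, hsub, hva⟩
    · obtain ⟨e, heR, heL, hesrc⟩ := extend_of_not_closed src dst R hbal a L hnd hch hsub hva
      have hnd' : (a :: (L ++ [e])).Nodup := by
        rw [show a :: (L ++ [e]) = (a :: L) ++ [e] from rfl]
        exact List.Nodup.append hnd (List.nodup_singleton e)
          (by intro x hx hx'; rw [List.mem_singleton] at hx'; subst hx'; exact heL hx)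
      have hch' : (a :: (L ++ [e])).Chain' (fun x y => dst x = src y) := by
        rw [show a :: (L ++ [e]) = (a :: L) ++ [e] from rfl]
        show List.IsChain _ _
        rw [List.isChain_append]
        refine ⟨hch, List.isChain_singleton e, ?_⟩
        intro x hx y hy
        rw [List.getLast?_eq_getLast (List.cons_ne_nil a L), Option.mem_some_iff] at hx
        rw [List.head?_cons, Option.mem_some_iff] at hy
        subst hx; subst hy
        exact hesrc.symm
      have hsub' : ∀ x ∈ a :: (L ++ [e]), x ∈ R := by
        intro x hx
        rw [show a :: (L ++ [e]) = (a :: L) ++ [e] from rfl, List.mem_append] at hx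
        rcases hx with hx | hx
        · exact hsub x hx
        · rw [List.mem_singleton] at hx; subst hx; exact heR
      have hlen' : R.card - (a :: (L ++ [e])).length ≤ k := by
        simp at hlen ⊢
        omega
      exact ih a (L ++ [e]) hnd' hch' hsub' hlen'


lemma head_of_head? {l : List E} {x : E} (h : l ≠ []) (hx : l.head? = some x) :
    l.head h = x := by
  rw [List.head?_eq_head h] at hx
  exact Option.some.inj hx

lemma getLast_of_getLast? {l : List E} {x : E} (h : l ≠ []) (hx : l.getLast? = some x) :
    l.getLast h = x := by
  rw [List.getLast?_eq_getLast h] at hx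
  exact Option.some.inj hx

lemma splice (T D : List E) (hT : T ≠ []) (hD : D ≠ [])
    (hchT : T.Chain' (fun x y => dst x = src y)) (hchD : D.Chain' (fun x y => dst x = src y))
    (hclT : dst (T.getLast hT) = src (T.head hT))
    (hclD : dst (D.getLast hD) = src (D.head hD))
    (i : Fin T.length) (hi : dst (T.get i) = src (D.head hD)) :
    ∃ (M : List E) (hM : M ≠ []), M.Perm (T ++ D) ∧
      M.Chain' (fun x y => dst x = src y) ∧ dst (M.getLast hM) = src (M.head hM) := by
  classical
  set tk := T.take (i.1 + 1) with htk
  set dr := T.drop (i.1 + 1) with hdr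
  have htkne : tk ≠ [] := by
    rw [htk, ← List.length_pos_iff_ne_nil, List.length_take]
    have := i.2
    omega
  have htd : tk ++ dr = T := List.take_append_drop _ T
  have htk2 : tk = T.take i.1 ++ [T.get i] := by
    rw [htk, List.take_succ, List.getElem?_eq_getElem i.2]
    rfl
  have hgetlast_tk : tk.getLast htkne = T.get i :=
    getLast_of_getLast? _ (by rw [htk2]; exact List.getLast?_concat)
  have hMne : (tk ++ D) ++ dr ≠ [] := by simp [htkne]
  refine ⟨(tk ++ D) ++ dr, hMne, ?_, ?_, ?_⟩
  · rw [List.append_assoc]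
    conv_rhs => rw [← htd, List.append_assoc]
    exact List.Perm.append_left _ List.perm_append_comm
  · show List.IsChain _ _
    rw [List.isChain_append]
    refine ⟨?_, List.IsChain.drop hchT _, ?_⟩
    · rw [List.isChain_append]
      refine ⟨List.IsChain.take hchT _, hchD, ?_⟩
      intro x hx y hy
      rw [List.getLast?_eq_getLast htkne, Option.mem_some_iff] at hx
      rw [List.head?_eq_head hD, Option.mem_some_iff] at hy
      subst hx; subst hy
      rw [hgetlast_tk]
      exact hi
    · intro x hx y hy
      rcases eq_or_ne dr [] with hdre | hdrne
      · rw [hdre] at hy; simp at hy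
      · rw [List.getLast?_eq_getLast (by simp [hD]), Option.mem_some_iff] at hx
        rw [List.head?_eq_head hdrne, Option.mem_some_iff] at hy
        subst hx; subst hy
        have hi1 : i.1 + 1 < T.length := by
          rw [hdr, ← List.length_pos_iff_ne_nil, List.length_drop] at hdrne
          omega
        have hxlast : (tk ++ D).getLast (by simp [hD]) = D.getLast hD :=
          getLast_of_getLast? _ (by
            rw [List.getLast?_append_of_ne_nil _ hD, List.getLast?_eq_getLast hD])
        have hyhead : dr.head hdrne = T.get ⟨i.1 + 1, hi1⟩ := List.head_drop _
        rw [hxlast, hyhead, hclD, ← hi]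
        exact (List.isChain_iff_getElem.1 hchT) i.1 (by omega)
  · -- closure
    have hheadT : T.head? = some (tk.head htkne) := by
      conv_lhs => rw [← htd]
      rw [List.head?_append_of_ne_nil _ htkne, List.head?_eq_head htkne]
    have hhead : ((tk ++ D) ++ dr).head hMne = T.head hT := by
      have h3 : ((tk ++ D) ++ dr).head? = some (tk.head htkne) := by
        rw [List.head?_append_of_ne_nil _ (by simp [htkne] : tk ++ D ≠ []),
          List.head?_append_of_ne_nil _ htkne, List.head?_eq_head htkne]
      rw [head_of_head? hMne h3, (head_of_head? hT hheadT)]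
    rw [hhead]
    rcases eq_or_ne dr [] with hdre | hdrne
    · have hlME : ((tk ++ D) ++ dr).getLast hMne = D.getLast hD :=
        getLast_of_getLast? _ (by
          rw [hdre, List.append_nil, List.getLast?_append_of_ne_nil _ hD,
            List.getLast?_eq_getLast hD])
      rw [hlME, hclD, ← hi]
      have hlast : T.get i = T.getLast hT := by
        have hi1 : i.1 + 1 = T.length := by
          rw [hdr, List.drop_eq_nil_iff] at hdre
          have := i.2
          omega
        rw [List.getLast_eq_get]
        congr 1
        apply Fin.ext
        show i.1 = T.length - 1
        omega
      rw [hlast]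
      exact hclT
    · have hlME : ((tk ++ D) ++ dr).getLast hMne = T.getLast hT := by
        have h5 : T.getLast? = dr.getLast? := by
          conv_lhs => rw [← htd]
          rw [List.getLast?_append_of_ne_nil _ hdrne]
        refine getLast_of_getLast? _ ?_
        rw [List.getLast?_append_of_ne_nil _ hdrne, ← h5,
          List.getLast?_eq_getLast hT]
      rw [hlME]
      exact hclT


lemma first_new (T : List E) : ∀ (Q : List E) (hQ : Q ≠ []),
    Q.Chain' (fun x y => dst x = src y) →
    (∃ p ∈ T, dst p = src (Q.head hQ)) → (∃ g ∈ Q, g ∉ T) →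
    ∃ f ∈ Q, f ∉ T ∧ ∃ p ∈ T, dst p = src f
  | [], hQ, _, _, _ => absurd rfl hQ
  | q :: Q', _, hch, hstart, hg => by
      by_cases hqT : q ∈ T
      · obtain ⟨g, hgmem, hgT⟩ := hg
        have hgQ' : g ∈ Q' := by
          rcases List.mem_cons.1 hgmem with rfl | h
          · exact absurd hqT hgT
          · exact h
        rcases Q' with _ | ⟨b, Q''⟩
        · simp at hgQ'
        · have hrel : dst q = src b := (List.isChain_cons_cons.mp hch).1
          obtain ⟨f, hf1, hf2, hf3⟩ := first_new T (b :: Q'') (List.cons_ne_nil _ _)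
            (List.isChain_cons_cons.mp hch).2 ⟨q, hqT, hrel⟩ ⟨g, hgQ', hgT⟩
          exact ⟨f, List.mem_cons_of_mem _ hf1, hf2, hf3⟩
      · exact ⟨q, List.mem_cons_self, hqT, hstart⟩


theorem euler_loop (S : Finset E)
    (hbal : ∀ v, (S.filter (fun e => src e = v)).card = (S.filter (fun e => dst e = v)).card)
    (hconn : ∀ u w : V, ∃ (P : List E) (hP : P ≠ []), (∀ e ∈ P, e ∈ S) ∧
      P.Chain' (fun x y => dst x = src y) ∧ src (P.head hP) = u ∧ dst (P.getLast hP) = w)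
    (k : ℕ) :
    ∀ (L : List E) (hL : L ≠ []), L.Nodup → L.Chain' (fun x y => dst x = src y) →
    (∀ e ∈ L, e ∈ S) → dst (L.getLast hL) = src (L.head hL) →
    S.card - L.length ≤ k →
    ∃ (M : List E) (hM : M ≠ []), M.Nodup ∧ M.Chain' (fun x y => dst x = src y) ∧
      M.toFinset = S ∧ dst (M.getLast hM) = src (M.head hM) := by
  induction k with
  | zero =>
    intro L hL hnd hch hsub hcl hlen
    refine ⟨L, hL, hnd, hch, ?_, hcl⟩
    have h1 : L.toFinset ⊆ S := fun x hx => hsub x (List.mem_toFinset.1 hx)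
    have h2 : L.toFinset.card = L.length := List.toFinset_card_of_nodup hnd
    exact Finset.eq_of_subset_of_card_le h1 (by omega)
  | succ k ih =>
    intro L hL hnd hch hsub hcl hlen
    by_cases hfull : L.toFinset = S
    · exact ⟨L, hL, hnd, hch, hfull, hcl⟩
    · have h1 : L.toFinset ⊆ S := fun x hx => hsub x (List.mem_toFinset.1 hx)
      obtain ⟨e, heS, heL⟩ := Finset.exists_of_ssubset (h1.ssubset_of_ne hfull)
      rw [List.mem_toFinset] at heL
      have hlenlt : L.length < S.card := by
        have := Finset.card_lt_card (h1.ssubset_of_ne hfull)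
        rw [List.toFinset_card_of_nodup hnd] at this
        exact this
      -- walk to src e
      obtain ⟨P, hP, hPS, hPch, hPsrc, hPdst⟩ := hconn (dst (L.getLast hL)) (src e)
      -- Q := P ++ [e]
      have hQne : P ++ [e] ≠ [] := by simp
      have hQch : (P ++ [e]).Chain' (fun x y => dst x = src y) := by
        show List.IsChain _ _
        rw [List.isChain_append]
        refine ⟨hPch, List.isChain_singleton e, ?_⟩
        intro x hx y hy
        rw [List.getLast?_eq_getLast hP, Option.mem_some_iff] at hx
        rw [List.head?_cons, Option.mem_some_iff] at hy
        subst hx; subst hy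
        exact hPdst
      have hQhead : (P ++ [e]).head hQne = P.head hP := by
        rw [List.head_append]
        simp [hP]
      obtain ⟨f, hfQ, hfL, p, hpL, hpf⟩ := first_new src dst L (P ++ [e]) hQne hQch
        (by rw [hQhead, hPsrc]; exact ⟨L.getLast hL, List.getLast_mem hL, rfl⟩)
        ⟨e, by simp, heL⟩
      have hfS : f ∈ S := by
        rcases List.mem_append.1 hfQ with h | h
        · exact hPS f h
        · rw [List.mem_singleton] at h; subst h; exact heS
      -- remaining edges
      set R := S \ L.toFinset with hR
      have hfR : f ∈ R := Finset.mem_sdiff.2 ⟨hfS, fun h => hfL (List.mem_toFinset.1 h)⟩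
      have hfilter_sdiff : ∀ v : V, ∀ g : E → V,
          R.filter (fun e => g e = v) = S.filter (fun e => g e = v)
            \ L.toFinset.filter (fun e => g e = v) := by
        intro v g
        ext x
        simp only [hR, Finset.mem_filter, Finset.mem_sdiff, List.mem_toFinset]
        tauto
      have hLcount : ∀ v, (L.toFinset.filter (fun e => src e = v)).card
          = (L.toFinset.filter (fun e => dst e = v)).card := by
        intro v
        have hc := count_src_dst src dst v L hch hL
        rw [hcl] at hc
        rw [← countP_eq_card_filter _ hnd, ← countP_eq_card_filter _ hnd]
        omega
      have hbalR : ∀ v, (R.filter (fun e => src e = v)).card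
          = (R.filter (fun e => dst e = v)).card := by
        intro v
        rw [hfilter_sdiff v src, hfilter_sdiff v dst,
          Finset.card_sdiff_of_subset (Finset.filter_subset_filter _ h1),
          Finset.card_sdiff_of_subset (Finset.filter_subset_filter _ h1), hbal v, hLcount v]
      obtain ⟨C, hCnd, hCch, hCsub, hCcl⟩ := grow_aux src dst R hbalR R.card f []
        (List.nodup_singleton f) (List.isChain_singleton f)
        (by intro x hx; rw [List.mem_singleton] at hx; subst hx; exact hfR)
        (by omega)
      -- index of p in L
      obtain ⟨i, hip⟩ := List.mem_iff_get.1 hpL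
      obtain ⟨M, hM, hMperm, hMch, hMcl⟩ := splice src dst L (f :: C) hL
        (List.cons_ne_nil f C) hch hCch hcl hCcl i
        (by show dst (L.get i) = src f; rw [hip]; exact hpf)
      have hdisj : ∀ x ∈ f :: C, x ∉ L := by
        intro x hx hxL
        have := Finset.mem_sdiff.1 (hCsub x hx)
        exact this.2 (List.mem_toFinset.2 hxL)
      have hMnd : M.Nodup := by
        rw [hMperm.nodup_iff]
        exact List.Nodup.append hnd hCnd (fun x hx hx' => hdisj x hx' hx)
      have hMsub : ∀ x ∈ M, x ∈ S := by
        intro x hx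
        rcases List.mem_append.1 (hMperm.mem_iff.1 hx) with h | h
        · exact hsub x h
        · exact (Finset.mem_sdiff.1 (hCsub x h)).1
      have hMlen : M.length = L.length + (C.length + 1) := by
        rw [hMperm.length_eq, List.length_append]
        rfl
      exact ih M hM hMnd hMch hMsub hMcl (by omega)

theorem euler_exists (S : Finset E) (hne : S.Nonempty)
    (hbal : ∀ v, (S.filter (fun e => src e = v)).card = (S.filter (fun e => dst e = v)).card)
    (hconn : ∀ u w : V, ∃ (P : List E) (hP : P ≠ []), (∀ e ∈ P, e ∈ S) ∧
      P.Chain' (fun x y => dst x = src y) ∧ src (P.head hP) = u ∧ dst (P.getLast hP) = w) :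
    ∃ (M : List E) (hM : M ≠ []), M.Nodup ∧ M.Chain' (fun x y => dst x = src y) ∧
      M.toFinset = S ∧ dst (M.getLast hM) = src (M.head hM) := by
  obtain ⟨e₀, he₀⟩ := hne
  obtain ⟨C, hCnd, hCch, hCsub, hCcl⟩ := grow_aux src dst S hbal S.card e₀ []
    (List.nodup_singleton e₀) (List.isChain_singleton e₀)
    (by intro x hx; rw [List.mem_singleton] at hx; subst hx; exact he₀)
    (by omega)
  exact euler_loop src dst S hbal hconn S.card (e₀ :: C) (List.cons_ne_nil _ _)
    hCnd hCch hCsub (by rw [hCcl]; rfl) (by omega)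

end Euler

open Function in
lemma snoc_injective_iff {m : ℕ} {α : Type*} {v : Fin m → α} {a : α} :
    Injective (Fin.snoc v a : Fin (m+1) → α) ↔ a ∉ Set.range v ∧ Injective v := by
  constructor
  · intro h
    constructor
    · rintro ⟨j, rfl⟩
      have := h (a₁ := j.castSucc) (a₂ := Fin.last m) (by simp)
      exact absurd this (by simp [Fin.ext_iff]; omega)
    · intro i j hij
      have := h (a₁ := i.castSucc) (a₂ := j.castSucc) (by simpa using hij)
      simpa [Fin.ext_iff] using this
  · rintro ⟨ha, hv⟩ i j hij
    induction i using Fin.lastCases with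
    | last =>
      induction j using Fin.lastCases with
      | last => rfl
      | cast j' =>
        rw [Fin.snoc_last, Fin.snoc_castSucc] at hij
        exact absurd ⟨j', hij.symm⟩ ha
    | cast i' =>
      induction j using Fin.lastCases with
      | last =>
        rw [Fin.snoc_castSucc, Fin.snoc_last] at hij
        exact absurd ⟨i', hij⟩ ha
      | cast j' =>
        rw [Fin.snoc_castSucc, Fin.snoc_castSucc] at hij
        rw [hv hij]

namespace UCycAux

def nsrc (m : ℕ) (e : Fin (m+3) → Fin (m+3)) : Fin (m+2) → Fin (m+3) := fun j => e j.castSucc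
def ndst (m : ℕ) (e : Fin (m+3) → Fin (m+3)) : Fin (m+2) → Fin (m+3) := fun j => e j.succ

open Function

lemma mem_wordsOf {m : ℕ} (w : Fin (m+3) → Fin (m+3)) :
    w ∈ wordsOf (fun w : Fin (m+3) → Fin (m+3) => ¬ Bijective w) ↔ ¬ Bijective w := by
  simp [wordsOf, Finset.mem_filter]

lemma snoc_eq_of_src {m : ℕ} (v : Fin (m+2) → Fin (m+3)) (e : Fin (m+3) → Fin (m+3))
    (h : nsrc m e = v) : Fin.snoc v (e (Fin.last (m+2))) = e := by
  funext j
  induction j using Fin.lastCases with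
  | last => simp
  | cast j' => rw [Fin.snoc_castSucc, ← h]; rfl

lemma cons_eq_of_dst {m : ℕ} (v : Fin (m+2) → Fin (m+3)) (e : Fin (m+3) → Fin (m+3))
    (h : ndst m e = v) : Fin.cons (e 0) v = e := by
  funext j
  induction j using Fin.cases with
  | zero => simp
  | succ j' => rw [Fin.cons_succ, ← h]; rfl

lemma balance (m : ℕ) (v : Fin (m+2) → Fin (m+3)) :
    ((wordsOf (fun w : Fin (m+3) → Fin (m+3) => ¬ Bijective w)).filter
        (fun e => nsrc m e = v)).card
      = ((wordsOf (fun w : Fin (m+3) → Fin (m+3) => ¬ Bijective w)).filter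
        (fun e => ndst m e = v)).card := by
  classical
  have h1 : (wordsOf (fun w : Fin (m+3) → Fin (m+3) => ¬ Bijective w)).filter
        (fun e => nsrc m e = v)
      = (Finset.univ.filter (fun a : Fin (m+3) => ¬ Bijective (Fin.snoc v a))).image
        (fun a => (Fin.snoc v a : Fin (m+3) → Fin (m+3))) := by
    ext e
    simp only [Finset.mem_filter, Finset.mem_image, Finset.mem_univ, true_and, mem_wordsOf]
    constructor
    · rintro ⟨hbij, hsrc⟩
      exact ⟨e (Fin.last (m+2)), by rw [snoc_eq_of_src v e hsrc]; exact hbij,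
        snoc_eq_of_src v e hsrc⟩
    · rintro ⟨a, hna, rfl⟩
      exact ⟨hna, by funext j; exact Fin.snoc_castSucc _ _ _⟩
  have h2 : (wordsOf (fun w : Fin (m+3) → Fin (m+3) => ¬ Bijective w)).filter
        (fun e => ndst m e = v)
      = (Finset.univ.filter (fun a : Fin (m+3) => ¬ Bijective (Fin.cons a v))).image
        (fun a => (Fin.cons a v : Fin (m+3) → Fin (m+3))) := by
    ext e
    simp only [Finset.mem_filter, Finset.mem_image, Finset.mem_univ, true_and, mem_wordsOf]
    constructor
    · rintro ⟨hbij, hdst⟩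
      exact ⟨e 0, by rw [cons_eq_of_dst v e hdst]; exact hbij, cons_eq_of_dst v e hdst⟩
    · rintro ⟨a, hna, rfl⟩
      exact ⟨hna, by funext j; exact Fin.cons_succ _ _ _⟩
  rw [h1, h2, Finset.card_image_of_injective _ (fun a b hab => by
      have := congrFun hab (Fin.last (m+2)); simpa using this),
    Finset.card_image_of_injective _ (fun a b hab => by
      have := congrFun hab 0; simpa using this)]
  congr 1
  apply Finset.filter_congr
  intro a _
  rw [← Finite.injective_iff_bijective, ← Finite.injective_iff_bijective,
    snoc_injective_iff, Fin.cons_injective_iff]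



def fullSeq (m : ℕ) (u v : Fin (m+2) → Fin (m+3)) (i : ℕ) : Fin (m+3) :=
  if h : i < m+2 then u ⟨i, h⟩
  else if i ≤ m+3 then u 0
  else if i ≤ 2*m+5 then 0
  else if i ≤ 2*m+7 then v 0
  else if h5 : i ≤ 3*m+8 then v ⟨i - (2*m+7), by omega⟩
  else 0

variable {m : ℕ} {u v : Fin (m+2) → Fin (m+3)}

lemma fs_u {i : ℕ} (h : i < m+2) : fullSeq m u v i = u ⟨i, h⟩ := dif_pos h
lemma fs_u0 {i : ℕ} (h1 : m+2 ≤ i) (h2 : i ≤ m+3) : fullSeq m u v i = u 0 := by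
  unfold fullSeq; split_ifs <;> first | rfl | omega
lemma fs_z {i : ℕ} (h1 : m+4 ≤ i) (h2 : i ≤ 2*m+5) : fullSeq m u v i = 0 := by
  unfold fullSeq; split_ifs <;> first | rfl | omega
lemma fs_v0 {i : ℕ} (h1 : 2*m+6 ≤ i) (h2 : i ≤ 2*m+7) : fullSeq m u v i = v 0 := by
  unfold fullSeq; split_ifs <;> first | rfl | omega
lemma fs_v {i : ℕ} (h1 : 2*m+8 ≤ i) (h2 : i ≤ 3*m+8) :
    fullSeq m u v i = v ⟨i - (2*m+7), by omega⟩ := by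
  unfold fullSeq; split_ifs <;> first | rfl | omega

lemma dup (k : ℕ) (hk : k ≤ 2*m+6) (u v : Fin (m+2) → Fin (m+3)) :
    ∃ p q, k ≤ p ∧ p < q ∧ q ≤ k + m + 2 ∧ fullSeq m u v p = fullSeq m u v q := by
  by_cases hk0 : k = 0
  · subst hk0
    refine ⟨0, m+2, le_refl _, by omega, by omega, ?_⟩
    rw [fs_u (by omega), fs_u0 (by omega) (by omega)]
    exact congrArg u (Fin.ext (by simp))
  by_cases hk1 : k ≤ m+2
  · exact ⟨m+2, m+3, by omega, by omega, by omega,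
      by rw [fs_u0 (by omega) (by omega), fs_u0 (by omega) (by omega)]⟩
  by_cases hk2 : k ≤ 2*m+4
  · exact ⟨2*m+4, 2*m+5, by omega, by omega, by omega,
      by rw [fs_z (by omega) (by omega), fs_z (by omega) (by omega)]⟩
  · exact ⟨2*m+6, 2*m+7, by omega, by omega, by omega,
      by rw [fs_v0 (by omega) (by omega), fs_v0 (by omega) (by omega)]⟩

lemma edge_not_bij (k : ℕ) (hk : k ≤ 2*m+6) (u v : Fin (m+2) → Fin (m+3)) :
    ¬ Bijective (fun j : Fin (m+3) => fullSeq m u v (k + j.1)) := by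
  rw [← Finite.injective_iff_bijective]
  obtain ⟨p, q, h1, h2, h3, h4⟩ := dup k hk u v
  intro hinj
  have := hinj (a₁ := ⟨p - k, by omega⟩) (a₂ := ⟨q - k, by omega⟩) (by
    show fullSeq m u v (k + (p - k)) = fullSeq m u v (k + (q - k))
    rw [show k + (p - k) = p by omega, show k + (q - k) = q by omega]
    exact h4)
  rw [Fin.ext_iff] at this
  simp only at this
  omega

/-- the connecting walk -/
noncomputable def walkP (m : ℕ) (u v : Fin (m+2) → Fin (m+3)) : List (Fin (m+3) → Fin (m+3)) :=
  List.ofFn (fun k : Fin (2*m+7) => (fun j : Fin (m+3) => fullSeq m u v (k.1 + j.1)))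

lemma walkP_ne_nil : walkP m u v ≠ [] := by
  unfold walkP
  simp [List.ofFn_eq_nil_iff]

lemma walkP_get (i : Fin (walkP m u v).length) :
    (walkP m u v).get i = fun j : Fin (m+3) => fullSeq m u v (i.1 + j.1) := by
  unfold walkP at *
  rw [List.get_ofFn]
  rfl

lemma walkP_length : (walkP m u v).length = 2*m+7 := by
  unfold walkP; rw [List.length_ofFn]

lemma walkP_mem (e : Fin (m+3) → Fin (m+3)) (he : e ∈ walkP m u v) : ¬ Bijective e := by
  unfold walkP at he
  rw [List.mem_ofFn] at he
  obtain ⟨k, rfl⟩ := he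
  exact edge_not_bij k.1 (by have := k.2; omega) u v

lemma walkP_chain :
    (walkP m u v).Chain' (fun x y => ndst m x = nsrc m y) := by
  show List.IsChain _ _
  rw [List.isChain_iff_getElem]
  intro i hi
  have e1 := walkP_get (m := m) (u := u) (v := v) ⟨i, by omega⟩
  have e2 := walkP_get (m := m) (u := u) (v := v) ⟨i+1, hi⟩
  rw [List.get_eq_getElem] at e1 e2
  rw [e1, e2]
  funext j
  show fullSeq m u v (i + (j.1 + 1)) = fullSeq m u v ((i+1) + j.1)
  congr 1
  omega

lemma walkP_src : nsrc m ((walkP m u v).head walkP_ne_nil) = u := by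
  have h0 : (walkP m u v).head walkP_ne_nil
      = (walkP m u v).get ⟨0, List.length_pos_of_ne_nil walkP_ne_nil⟩ := by
    rw [List.head_eq_getElem_zero]
    rfl
  rw [h0, walkP_get]
  funext j
  show fullSeq m u v (0 + j.castSucc.1) = u j
  rw [show (0 + j.castSucc.1 : ℕ) = j.1 by simp [Fin.coe_castSucc]]
  rw [fs_u j.2]

lemma walkP_dst : ndst m ((walkP m u v).getLast walkP_ne_nil) = v := by
  have h0 : (walkP m u v).getLast walkP_ne_nil
      = (walkP m u v).get ⟨(walkP m u v).length - 1,
          by have := List.length_pos_of_ne_nil (walkP_ne_nil (m := m) (u := u) (v := v)); omega⟩ :=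
    List.getLast_eq_get _ _
  rw [h0, walkP_get]
  funext j
  show fullSeq m u v ((walkP m u v).length - 1 + (j.1 + 1)) = v j
  rw [walkP_length]
  by_cases hj : j.1 = 0
  · rw [show 2*m+7 - 1 + (j.1 + 1) = 2*m+7 by omega, fs_v0 (by omega) (by omega)]
    exact congrArg v (Fin.ext hj.symm)
  · rw [show 2*m+7 - 1 + (j.1 + 1) = 2*m+7+j.1 by omega,
      fs_v (by omega) (by have := j.2; omega)]
    exact congrArg v (Fin.ext (by simp))



end UCycAux

namespace UCycAux
open Function
lemma hasUCycle_of_closed_trail (m : ℕ) (S : Finset (Fin (m+3) → Fin (m+3)))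
    (M : List (Fin (m+3) → Fin (m+3))) (hM : M ≠ []) (hnd : M.Nodup)
    (hch : M.Chain' (fun x y => ndst m x = nsrc m y))
    (hfin : M.toFinset = S)
    (hcl : ndst m (M.getLast hM) = nsrc m (M.head hM)) :
    HasUCycle S := by
  classical
  have hlen : M.length = S.card := by rw [← hfin, List.toFinset_card_of_nodup hnd]
  have hNpos : 0 < S.card := by rw [← hlen]; exact List.length_pos_of_ne_nil hM
  haveI : NeZero S.card := ⟨by omega⟩
  have hlt : ∀ i : ZMod S.card, i.val < M.length := fun i => by
    rw [hlen]; exact ZMod.val_lt i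
  set g : ZMod S.card → (Fin (m+3) → Fin (m+3)) :=
    fun i => M.get ⟨i.val, hlt i⟩ with hg
  have hstep : ∀ i : ZMod S.card, ndst m (g i) = nsrc m (g (i+1)) := by
    intro i
    have hvala : (i + 1).val = (i.val + 1) % S.card := by
      rw [ZMod.val_add, ZMod.val_one_eq_one_mod]
      conv_rhs => rw [Nat.add_mod, Nat.mod_eq_of_lt (ZMod.val_lt i)]
    by_cases h : i.val + 1 < S.card
    · have h2 : (i+1).val = i.val + 1 := by rw [hvala, Nat.mod_eq_of_lt h]
      have h3 : i.val + 1 < M.length := by omega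
      have h4 : (⟨(i+1).val, hlt (i+1)⟩ : Fin M.length) = ⟨i.val + 1, h3⟩ := Fin.ext h2
      show ndst m (M.get ⟨i.val, hlt i⟩) = nsrc m (M.get ⟨(i+1).val, hlt (i+1)⟩)
      rw [h4]
      exact (List.isChain_iff_getElem.1 hch) i.val (by omega)
    · have hival : i.val + 1 = S.card := by have := ZMod.val_lt i; omega
      have h2 : (i+1).val = 0 := by rw [hvala, hival, Nat.mod_self]
      have h0 : 0 < M.length := by omega
      have hl1 : M.length - 1 < M.length := by omega
      have h5 : (⟨i.val, hlt i⟩ : Fin M.length)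
          = ⟨M.length - 1, hl1⟩ := Fin.ext (by simp; omega)
      have h6 : (⟨(i+1).val, hlt (i+1)⟩ : Fin M.length)
          = ⟨0, h0⟩ := Fin.ext (by simp [h2])
      show ndst m (M.get ⟨i.val, hlt i⟩) = nsrc m (M.get ⟨(i+1).val, hlt (i+1)⟩)
      have hhd : M.head hM = M.get ⟨0, h0⟩ := by
        rw [List.head_eq_getElem_zero hM]
        rfl
      rw [h5, h6, ← List.getLast_eq_get M hM, ← hhd]
      exact hcl
  have hwin : ∀ (t : ℕ) (ht : t < m+3) (i : ZMod S.card),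
      g i ⟨t, ht⟩ = g (i + (t : ZMod S.card)) 0 := by
    intro t
    induction t with
    | zero =>
      intro ht i
      rw [Nat.cast_zero, add_zero]
      exact congrArg (g i) (Fin.ext (by simp))
    | succ t ihw =>
      intro ht i
      have h7 : t < m + 2 := by omega
      have h8 : g i ⟨t+1, ht⟩ = g (i+1) ⟨t, by omega⟩ := congrFun (hstep i) ⟨t, h7⟩
      rw [h8, ihw (by omega) (i+1)]
      have h9 : i + 1 + (t : ZMod S.card) = i + ((t+1 : ℕ) : ZMod S.card) := by
        push_cast
        ring
      rw [h9]
  unfold HasUCycle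
  refine ⟨fun i => g i 0, ?_⟩
  show Set.BijOn (fun i : ZMod S.card => fun j : Fin (m+3) =>
    g (i + (j.val : ZMod S.card)) 0) Set.univ ↑S
  have hfeq : (fun i : ZMod S.card => fun j : Fin (m+3) =>
      g (i + (j.val : ZMod S.card)) 0) = g :=
    funext fun i => funext fun j => (hwin j.1 j.2 i).symm
  rw [hfeq]
  refine ⟨?_, ?_, ?_⟩
  · intro i _
    have : g i ∈ M := List.get_mem M _
    rw [← hfin]
    simpa using this
  · intro i _ i' _ hgi
    have := (List.nodup_iff_injective_get.1 hnd) hgi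
    exact ZMod.val_injective S.card (congrArg Fin.val this)
  · intro w hw
    rw [← hfin, Finset.mem_coe, List.mem_toFinset] at hw
    obtain ⟨k, hk⟩ := List.mem_iff_get.1 hw
    refine ⟨((k.1 : ℕ) : ZMod S.card), Set.mem_univ _, ?_⟩
    show g _ = w
    rw [← hk]
    refine congrArg M.get (Fin.ext ?_)
    show ((k.1 : ℕ) : ZMod S.card).val = k.1
    rw [ZMod.val_natCast]
    exact Nat.mod_eq_of_lt (by rw [← hlen]; exact k.2)


end UCycAux

/-- For `n ≥ 3`, a U-cycle of non-bijective words of length `n` over `Fin n` exists. -/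
theorem ucycle_non_bijections (n : ℕ) (hn : 3 ≤ n) :
    HasUCycle (wordsOf (fun w : Fin n → Fin n => ¬ Function.Bijective w)) := by
  classical
  obtain ⟨m, rfl⟩ : ∃ m, n = m + 3 := ⟨n - 3, by omega⟩
  have hne : (wordsOf (fun w : Fin (m+3) → Fin (m+3) => ¬ Function.Bijective w)).Nonempty := by
    refine ⟨fun _ => 0, ?_⟩
    rw [UCycAux.mem_wordsOf]
    intro hbij
    have h01 : (0 : Fin (m+3)) = 1 := hbij.injective rfl
    simp at h01
  obtain ⟨M, hM, hnd, hch, hfin, hcl⟩ := euler_exists (UCycAux.nsrc m) (UCycAux.ndst m)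
    (wordsOf (fun w : Fin (m+3) → Fin (m+3) => ¬ Function.Bijective w)) hne
    (UCycAux.balance m)
    (fun u w => ⟨UCycAux.walkP m u w, UCycAux.walkP_ne_nil,
      fun e he => (UCycAux.mem_wordsOf e).2 (UCycAux.walkP_mem e he),
      UCycAux.walkP_chain, UCycAux.walkP_src, UCycAux.walkP_dst⟩)
  exact UCycAux.hasUCycle_of_closed_trail m _ M hM hnd hch hfin hcl
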